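/- Let F be a field, let D be a finite-dimensional division F-algebra with center F that is not equal to F (i.e., D is a central division F-algebra of degree n > 1), let m ∈ ℕ, and let A = M_m(D) be the algebra of m×m matrices over D. Let τ : A → F be a nonzero F-linear functional and H = ker τ its kernel (a hyperplane of A). Then every element a ∈ A can be written as a = h₁h₂ for some h₁, h₂ ∈ H. -/

import Mathlib

open Module Submodule LinearMap

/-- An endomorphism `1 + t • u` is injective for some nonzero `t`. -/
lemma exists_unit_perturb {F V : Type*} [Field F] [Infinite F] [AddCommGroup V] [Module F V]
    [FiniteDimensional F V] (u : V →ₗ[F] V) :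
    ∃ t : F, t ≠ 0 ∧ Function.Injective (LinearMap.id (R := F) (M := V) + t • u) := by
  have hfin : (Set.Finite ((Module.End.HasEigenvalue u) ∪ {0} : Set F)) :=
    (Module.End.finite_hasEigenvalue u).union (Set.finite_singleton 0)
  obtain ⟨s, hs⟩ := hfin.exists_notMem
  have hs0 : s ≠ 0 := fun h => hs (Or.inr (by simp [h]))
  have hsev : ¬ Module.End.HasEigenvalue u s := fun h => hs (Or.inl h)
  refine ⟨-s⁻¹, by simp [hs0], ?_⟩
  rw [← LinearMap.ker_eq_bot]
  rw [Submodule.eq_bot_iff]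
  intro x hx
  by_contra hx0
  apply hsev
  apply Module.End.hasEigenvalue_of_hasEigenvector (x := x)
  constructor
  · rw [Module.End.mem_eigenspace_iff]
    have : x + (-s⁻¹) • u x = 0 := by simpa using hx
    have h2 : u x = s • x := by
      have := congrArg (fun y => s • y) this
      simp only [smul_add, smul_zero, smul_smul] at this
      rw [mul_neg, mul_inv_cancel₀ hs0] at this
      have h3 : s • x + -(u x) = 0 := by simpa using this
      rw [add_neg_eq_zero] at h3
      exact h3.symm
    exact h2
  · exact hx0

/-- **Pencil lemma**: if the rank of `f + t • g` never exceeds the rank of `f`,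
then `g` maps the kernel of `f` into the range of `f`. -/
lemma pencil {F V W : Type*} [Field F] [Infinite F] [AddCommGroup V] [Module F V]
    [AddCommGroup W] [Module F W] [FiniteDimensional F V] [FiniteDimensional F W]
    (f g : V →ₗ[F] W)
    (hrk : ∀ t : F, finrank F (LinearMap.range (f + t • g)) ≤ finrank F (LinearMap.range f))
    {v : V} (hv : f v = 0) : g v ∈ LinearMap.range f := by
  by_contra hgv
  have hgv0 : g v ≠ 0 := fun h => hgv (h ▸ (LinearMap.range f).zero_mem)
  set W₁ := LinearMap.range f with hW₁
  obtain ⟨V₀, hV₀⟩ := Submodule.exists_isCompl (LinearMap.ker f)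
  obtain ⟨C, hC⟩ := Submodule.exists_isCompl (W₁ ⊔ Submodule.span F {g v})
  set C' := C ⊔ Submodule.span F {g v} with hC'def
  have hgvC' : g v ∈ C' := Submodule.mem_sup_right (Submodule.mem_span_singleton_self (g v))
  have hWC' : IsCompl W₁ C' := by
    constructor
    · rw [Submodule.disjoint_def]
      intro x hx1 hx2
      rw [hC'def, Submodule.mem_sup] at hx2
      obtain ⟨c, hc, z, hz, rfl⟩ := hx2
      obtain ⟨α, rfl⟩ := Submodule.mem_span_singleton.mp hz
      have hc0 : c = 0 := by
        have hmem : c ∈ W₁ ⊔ Submodule.span F {g v} := by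
          have h1 : (c + α • g v) - α • g v ∈ W₁ ⊔ Submodule.span F {g v} :=
            Submodule.sub_mem _ (Submodule.mem_sup_left hx1)
              (Submodule.mem_sup_right (Submodule.smul_mem _ α
                (Submodule.mem_span_singleton_self (g v))))
          simpa using h1
        exact Submodule.disjoint_def.mp hC.disjoint c hmem hc
      subst hc0
      rcases eq_or_ne α 0 with rfl | hα
      · simp
      · exfalso; apply hgv
        have hx1' : α • g v ∈ W₁ := by simpa using hx1
        have heq : g v = α⁻¹ • (α • g v) := by rw [smul_smul, inv_mul_cancel₀ hα, one_smul]
        rw [heq]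
        exact Submodule.smul_mem _ _ hx1'
    · rw [codisjoint_iff]
      rw [hC'def]
      have : W₁ ⊔ (C ⊔ Submodule.span F {g v}) = (W₁ ⊔ Submodule.span F {g v}) ⊔ C := by
        rw [sup_comm C, ← sup_assoc]
      rw [this, codisjoint_iff.mp hC.codisjoint]
  set π₁ := W₁.linearProjOfIsCompl C' hWC' with hπ₁
  have hfmem : ∀ x : V₀, f x.1 ∈ W₁ := fun x => LinearMap.mem_range_self f x.1
  set f' : V₀ →ₗ[F] W₁ :=
    (f.comp V₀.subtype).codRestrict W₁ (fun x => LinearMap.mem_range_self f _) with hf'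
  have hf'app : ∀ x : V₀, (f' x : W) = f x.1 := fun x => rfl
  have hf'inj : Function.Injective f' := by
    intro x y hxy
    have h1 : f x.1 = f y.1 := congrArg Subtype.val hxy
    have h2 : x.1 - y.1 ∈ LinearMap.ker f := by
      rw [LinearMap.mem_ker, map_sub, h1, sub_self]
    have h3 : x.1 - y.1 ∈ V₀ := Submodule.sub_mem _ x.2 y.2
    have h4 : x.1 - y.1 = 0 := Submodule.disjoint_def.mp hV₀.disjoint _ h2 h3
    exact Subtype.ext (sub_eq_zero.mp h4)
  have hf'surj : Function.Surjective f' := by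
    rintro ⟨w, hw⟩
    obtain ⟨z, rfl⟩ := hw
    have hz : z ∈ LinearMap.ker f ⊔ V₀ := by
      rw [codisjoint_iff.mp hV₀.codisjoint]; trivial
    obtain ⟨k, hk, x₀, hx₀, rfl⟩ := Submodule.mem_sup.mp hz
    refine ⟨⟨x₀, hx₀⟩, Subtype.ext ?_⟩
    rw [hf'app]
    simp only [map_add]
    rw [LinearMap.mem_ker.mp hk, zero_add]
  set f₀ := LinearEquiv.ofBijective f' ⟨hf'inj, hf'surj⟩ with hf₀
  set u : V₀ →ₗ[F] V₀ :=
    f₀.symm.toLinearMap ∘ₗ (π₁ ∘ₗ (g ∘ₗ V₀.subtype)) with hu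
  obtain ⟨t, ht0, htinj⟩ := exists_unit_perturb u
  set N := f + t • g with hN
  have keyf' : ∀ x : V₀, f₀ x = f' x := fun x => rfl
  have hπgv : π₁ (g v) = 0 := Submodule.projectionOnto_apply_of_mem_right hWC' hgvC'
  have key : ∀ ξ : V₀, π₁ (N ξ.1) = f' (ξ + t • u ξ) := by
    intro ξ
    have h1 : N ξ.1 = f ξ.1 + t • g ξ.1 := by simp [hN]
    have h2 : π₁ (f ξ.1) = f' ξ := by
      have := Submodule.linearProjOfIsCompl_apply_left hWC' (f' ξ)
      rw [hf'app] at this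
      exact this
    have h3 : π₁ (g ξ.1) = f' (u ξ) := by
      have hfs : ∀ y : W₁, f' (f₀.symm y) = y := fun y => by
        have h : f' (f₀.symm y) = f₀ (f₀.symm y) := rfl
        rw [h, LinearEquiv.apply_symm_apply]
      rw [hu]
      simp only [LinearMap.comp_apply, LinearEquiv.coe_coe]
      rw [hfs]
      rfl
    rw [h1, map_add, map_smul, h2, h3, map_add, map_smul]
  have hNv : N v = t • g v := by simp [hN, hv]
  set Nt : (V₀ × F) →ₗ[F] W :=
    (N ∘ₗ (V₀.subtype ∘ₗ LinearMap.fst F V₀ F)) + (LinearMap.snd F V₀ F).smulRight (g v)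
    with hNt
  have hNtapp : ∀ p : V₀ × F, Nt p = N p.1.1 + p.2 • g v := fun p => rfl
  have hrange : LinearMap.range Nt ≤ LinearMap.range N := by
    rintro w ⟨⟨ξ, c⟩, rfl⟩
    rw [hNtapp]
    apply Submodule.add_mem
    · exact LinearMap.mem_range_self N ξ.1
    · have : c • g v = N ((c * t⁻¹) • v) := by
        rw [map_smul, hNv, smul_smul, mul_assoc, inv_mul_cancel₀ ht0, mul_one]
      rw [this]
      exact LinearMap.mem_range_self N _
  have hNtinj : Function.Injective Nt := by
    rw [← LinearMap.ker_eq_bot, Submodule.eq_bot_iff]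
    rintro ⟨ξ, c⟩ hp
    have h0 : N ξ.1 + c • g v = 0 := hp
    have h1 : π₁ (N ξ.1 + c • g v) = 0 := by rw [h0, map_zero]
    rw [map_add, map_smul, hπgv, smul_zero, add_zero, key] at h1
    have h2 : ξ + t • u ξ = 0 := by
      apply hf'inj
      rw [h1, map_zero]
    have h3 : ξ = 0 := by
      apply htinj
      simpa using h2
    subst h3
    have h4 : c • g v = 0 := by simpa using h0
    rcases smul_eq_zero.mp h4 with hc | hgv'
    · exact Prod.ext rfl hc
    · exact absurd hgv' hgv0
  have e1 : finrank F (LinearMap.ker f) + finrank F V₀ = finrank F V :=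
    Submodule.finrank_add_eq_of_isCompl hV₀
  have e2 : finrank F W₁ + finrank F (LinearMap.ker f) = finrank F V :=
    LinearMap.finrank_range_add_finrank_ker f
  have e3 : finrank F V₀ = finrank F W₁ := by omega
  have e4 : finrank F (V₀ × F) = finrank F W₁ + 1 := by
    rw [Module.finrank_prod, finrank_self, e3]
  have e5 : finrank F (LinearMap.range Nt) = finrank F W₁ + 1 := by
    rw [LinearMap.finrank_range_of_inj hNtinj, e4]
  have e6 : finrank F (LinearMap.range Nt) ≤ finrank F (LinearMap.range N) :=
    Submodule.finrank_mono hrange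
  have e7 := hrk t
  rw [← hN] at e7
  omega

section Sing

variable {F D : Type*} [Field F] [DivisionRing D] [Algebra F D] [FiniteDimensional F D]
variable {m : ℕ}

/-- Left multiplication by a matrix, as an `F`-linear endomorphism of `Fin m → D`. -/
noncomputable def mulVecF (x : Matrix (Fin m) (Fin m) D) : (Fin m → D) →ₗ[F] (Fin m → D) where
  toFun v := x.mulVec v
  map_add' v w := Matrix.mulVec_add x v w
  map_smul' c v := by
    ext i
    simp only [Matrix.mulVec, dotProduct, RingHom.id_apply, Pi.smul_apply]
    rw [Finset.smul_sum]
    refine Finset.sum_congr rfl fun j _ => ?_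
    rw [Algebra.smul_def, Algebra.smul_def, ← mul_assoc,
      ← Algebra.commutes (A := D) c (x i j), mul_assoc]

@[simp] lemma mulVecF_apply (x : Matrix (Fin m) (Fin m) D) (v : Fin m → D) :
    mulVecF (F := F) x v = x.mulVec v := rfl

/-- `mulVecF` as a linear map in the matrix argument. -/
noncomputable def LLF : Matrix (Fin m) (Fin m) D →ₗ[F] ((Fin m → D) →ₗ[F] (Fin m → D)) where
  toFun := mulVecF
  map_add' x y := LinearMap.ext fun v => by
    simp [Matrix.add_mulVec]
  map_smul' c x := LinearMap.ext fun v => funext fun i => by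
    simp only [mulVecF_apply, RingHom.id_apply, LinearMap.smul_apply, Pi.smul_apply,
      Matrix.mulVec, dotProduct]
    rw [Finset.smul_sum]
    refine Finset.sum_congr rfl fun j _ => ?_
    rw [Matrix.smul_apply, Algebra.smul_def, Algebra.smul_def, mul_assoc]

lemma isUnit_of_mulVecF_inj (x : Matrix (Fin m) (Fin m) D)
    (h : Function.Injective (mulVecF (F := F) x)) : IsUnit x := by
  have hsurj : Function.Surjective (mulVecF (F := F) x) :=
    (LinearMap.injective_iff_surjective).mp h
  choose c hc using fun j : Fin m => hsurj (Pi.single j 1)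
  set y : Matrix (Fin m) (Fin m) D := Matrix.of fun i j => c j i with hy
  have hxy : x * y = 1 := by
    ext i j
    rw [Matrix.mul_apply, Matrix.one_apply]
    have h4 : x.mulVec (c j) i = (Pi.single j 1 : Fin m → D) i := by
      have := hc j
      rw [mulVecF_apply] at this
      rw [this]
    rw [Matrix.mulVec, dotProduct] at h4
    have hyc : ∀ k, y k j = c j k := fun k => rfl
    simp only [hyc]
    rw [h4, Pi.single_apply]
  have hyx : y * x = 1 := by
    have h0 : x * (y * x - 1) = 0 := by
      rw [mul_sub, ← mul_assoc, hxy, one_mul, mul_one, sub_self]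
    have h1 : ∀ v, mulVecF (F := F) (y * x - 1) v = 0 := by
      intro v
      apply h
      rw [mulVecF_apply, mulVecF_apply, Matrix.mulVec_mulVec, h0]
      simp [Matrix.zero_mulVec]
    have h2 : y * x - 1 = 0 := by
      ext i j
      have h3 := congrFun (h1 (Pi.single j 1)) i
      rw [mulVecF_apply, Matrix.mulVec, dotProduct] at h3
      simp only [Pi.single_apply, mul_ite, mul_one, mul_zero] at h3
      rw [Finset.sum_ite_eq' (Finset.univ : Finset (Fin m)) j] at h3
      simpa using h3
    have h2' : y * x = 1 := by rw [← sub_eq_zero]; exact h2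
    exact h2'
  exact ⟨⟨x, y, hxy, hyx⟩, rfl⟩
  
/-- A subspace of `Mₘ(D)` containing no unit has `F`-codimension at least `dim_F D`. -/
lemma sing_codim [Infinite F] (U : Submodule F (Matrix (Fin m) (Fin m) D))
    (hU : ∀ x ∈ U, ¬ IsUnit x) :
    finrank F U + finrank F D ≤ finrank F (Matrix (Fin m) (Fin m) D) := by
  classical
  have hker : ∀ x ∈ U, ∃ v : Fin m → D, v ≠ 0 ∧ x.mulVec v = 0 := by
    intro x hx
    by_contra h
    push_neg at h
    refine hU x hx (isUnit_of_mulVecF_inj (F := F) x ?_)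
    rw [← LinearMap.ker_eq_bot, Submodule.eq_bot_iff]
    intro v hv
    by_contra hv0
    exact h v hv0 (by simpa using hv)
  set T : Set ℕ :=
    {n | ∃ x ∈ U, finrank F (LinearMap.range (mulVecF (F := F) x)) = n} with hT
  have hTne : T.Nonempty := ⟨_, ⟨0, U.zero_mem, rfl⟩⟩
  have hTbdd : BddAbove T := by
    refine ⟨finrank F (Fin m → D), ?_⟩
    rintro n ⟨x, hx, rfl⟩
    exact Submodule.finrank_le _
  obtain ⟨x₀, hx₀U, hx₀rk⟩ := Nat.sSup_mem hTne hTbdd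
  have hmax : ∀ y ∈ U, finrank F (LinearMap.range (mulVecF (F := F) y)) ≤ sSup T :=
    fun y hy => le_csSup hTbdd ⟨y, hy, rfl⟩
  have hpencil : ∀ y ∈ U, ∀ v ∈ LinearMap.ker (mulVecF (F := F) x₀),
      mulVecF (F := F) y v ∈ LinearMap.range (mulVecF (F := F) x₀) := by
    intro y hy v hv
    apply pencil (mulVecF (F := F) x₀) (mulVecF (F := F) y) _ (LinearMap.mem_ker.mp hv)
    intro t
    have h1 : mulVecF (F := F) x₀ + t • mulVecF (F := F) y
        = mulVecF (F := F) (x₀ + t • y) := by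
      have := (LLF (F := F) (D := D) (m := m)).map_add x₀ (t • y)
      have h2 := (LLF (F := F) (D := D) (m := m)).map_smul t y
      change mulVecF (x₀ + t • y) = mulVecF x₀ + mulVecF (t • y) at this
      change mulVecF (t • y) = t • mulVecF y at h2
      rw [this, h2]
    rw [h1, hx₀rk]
    exact hmax _ (U.add_mem hx₀U (U.smul_mem t hy))
  obtain ⟨v₀, hv₀ne, hv₀⟩ := hker x₀ hx₀U
  have hv₀ker : v₀ ∈ LinearMap.ker (mulVecF (F := F) x₀) := by
    rw [LinearMap.mem_ker, mulVecF_apply, hv₀]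
  obtain ⟨i₀, hi₀⟩ := Function.ne_iff.mp hv₀ne
  have hi₀' : v₀ i₀ ≠ 0 := by simpa using hi₀
  -- the embedding of D into the kernel
  set emb : D →ₗ[F] (Fin m → D) :=
    { toFun := fun d => fun i => v₀ i * d
      map_add' := fun d e => by ext i; simp [mul_add]
      map_smul' := fun c d => by
        ext i
        simp only [RingHom.id_apply, Pi.smul_apply]
        rw [Algebra.smul_def, Algebra.smul_def, ← mul_assoc,
          ← Algebra.commutes (A := D) c (v₀ i), mul_assoc] } with hemb
  have hembker : ∀ d : D, emb d ∈ LinearMap.ker (mulVecF (F := F) x₀) := by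
    intro d
    rw [LinearMap.mem_ker, mulVecF_apply]
    ext i
    have : x₀.mulVec (emb d) i = (x₀.mulVec v₀ i) * d := by
      rw [Matrix.mulVec, Matrix.mulVec, dotProduct, dotProduct,
        Finset.sum_mul]
      exact Finset.sum_congr rfl fun j _ => by
        show x₀ i j * (v₀ j * d) = x₀ i j * v₀ j * d
        rw [mul_assoc]
    rw [this, hv₀]
    simp
  have hembinj : Function.Injective emb := by
    intro d e hde
    have := congrFun hde i₀
    simp only [hemb, LinearMap.coe_mk, AddHom.coe_mk] at this
    exact mul_left_cancel₀ hi₀' this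
  have hdim_ker : finrank F D ≤ finrank F (LinearMap.ker (mulVecF (F := F) x₀)) := by
    let embK := emb.codRestrict (LinearMap.ker (mulVecF (F := F) x₀)) hembker
    have hinj : Function.Injective embK := by
      intro d e hde
      apply hembinj
      exact congrArg Subtype.val hde
    exact LinearMap.finrank_le_finrank_of_injective hinj
  -- the quotient map
  set I₀ := LinearMap.range (mulVecF (F := F) x₀) with hI₀
  set η : Matrix (Fin m) (Fin m) D →ₗ[F] ((Fin m → D) ⧸ I₀) :=
    { toFun := fun y => I₀.mkQ (y.mulVec v₀)
      map_add' := fun y z => by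
        show I₀.mkQ ((y + z).mulVec v₀) = I₀.mkQ (y.mulVec v₀) + I₀.mkQ (z.mulVec v₀)
        rw [Matrix.add_mulVec, map_add]
      map_smul' := fun c y => by
        have h2 := (LLF (F := F) (D := D) (m := m)).map_smul c y
        change mulVecF (c • y) = c • mulVecF y at h2
        have h3 : (c • y).mulVec v₀ = c • (y.mulVec v₀) := by
          have := congrFun (congrArg DFunLike.coe h2) v₀
          simpa using this
        show I₀.mkQ ((c • y).mulVec v₀) = c • I₀.mkQ (y.mulVec v₀)
        rw [h3, map_smul] } with hη
  have hUker : U ≤ LinearMap.ker η := by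
    intro y hy
    rw [LinearMap.mem_ker]
    show I₀.mkQ (y.mulVec v₀) = 0
    rw [Submodule.mkQ_apply, Submodule.Quotient.mk_eq_zero]
    exact hpencil y hy v₀ hv₀ker
  have hηsurj : Function.Surjective η := by
    intro wq
    obtain ⟨w, rfl⟩ := Submodule.mkQ_surjective I₀ wq
    refine ⟨Matrix.of fun i j => if j = i₀ then w i * (v₀ i₀)⁻¹ else 0, ?_⟩
    show I₀.mkQ (Matrix.mulVec _ v₀) = I₀.mkQ w
    congr 1
    ext i
    rw [Matrix.mulVec, dotProduct]
    simp only [Matrix.of_apply, ite_mul, zero_mul]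
    rw [Finset.sum_ite_eq' (Finset.univ : Finset (Fin m)) i₀]
    simp [mul_assoc, inv_mul_cancel₀ hi₀']
  -- dimension bookkeeping
  have e1 : finrank F (LinearMap.range η) + finrank F (LinearMap.ker η)
      = finrank F (Matrix (Fin m) (Fin m) D) :=
    LinearMap.finrank_range_add_finrank_ker η
  have e2 : LinearMap.range η = ⊤ := LinearMap.range_eq_top.mpr hηsurj
  have e3 : finrank F (LinearMap.range η) = finrank F ((Fin m → D) ⧸ I₀) := by
    rw [e2]; exact finrank_top F _
  have e4 : finrank F ((Fin m → D) ⧸ I₀) + finrank F I₀ = finrank F (Fin m → D) :=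
    Submodule.finrank_quotient_add_finrank I₀
  have e5 : finrank F I₀ + finrank F (LinearMap.ker (mulVecF (F := F) x₀))
      = finrank F (Fin m → D) :=
    LinearMap.finrank_range_add_finrank_ker _
  have e6 : finrank F U ≤ finrank F (LinearMap.ker η) := Submodule.finrank_mono hUker
  omega

end Sing

section Adjoin

variable {F D : Type*} [Field F] [DivisionRing D] [Algebra F D] [FiniteDimensional F D]

lemma inv_mem_adjoin {x : D} (hx : x ≠ 0) : x⁻¹ ∈ Algebra.adjoin F {x} := by
  have hint : IsIntegral F x := Algebra.IsIntegral.isIntegral x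
  set p := minpoly F x with hp
  have hc₀ : p.coeff 0 ≠ 0 := minpoly.coeff_zero_ne_zero hint hx
  have hdiv : p.divX * Polynomial.X + Polynomial.C (p.coeff 0) = p := p.divX_mul_X_add
  have haev : Polynomial.aeval x p = 0 := minpoly.aeval F x
  set w := Polynomial.aeval x p.divX with hw
  have hwx : w * x + algebraMap F D (p.coeff 0) = 0 := by
    have h1 := congrArg (Polynomial.aeval x) hdiv
    rw [map_add, map_mul, Polynomial.aeval_X, Polynomial.aeval_C, haev] at h1
    exact h1
  have hleft : ((-(p.coeff 0)⁻¹) • w) * x = 1 := by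
    rw [smul_mul_assoc]
    have h2 : w * x = -(algebraMap F D (p.coeff 0)) := eq_neg_of_add_eq_zero_left hwx
    rw [h2, smul_neg, neg_smul, neg_neg, Algebra.smul_def, ← map_mul,
      inv_mul_cancel₀ hc₀, map_one]
  have hxinv : (-(p.coeff 0)⁻¹) • w = x⁻¹ := (mul_eq_one_iff_eq_inv₀ hx).mp hleft
  rw [← hxinv]
  have hw_mem : w ∈ Algebra.adjoin F {x} := by
    rw [Algebra.adjoin_singleton_eq_range_aeval]
    exact ⟨p.divX, rfl⟩
  exact Subalgebra.smul_mem _ hw_mem _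

lemma adjoin_singleton_comm {q : D} {x y : D} (hx : x ∈ Algebra.adjoin F {q})
    (hy : y ∈ Algebra.adjoin F {q}) : x * y = y * x := by
  rw [Algebra.adjoin_singleton_eq_range_aeval] at hx hy
  obtain ⟨px, rfl⟩ := hx
  obtain ⟨py, rfl⟩ := hy
  rw [← map_mul, ← map_mul, mul_comm]

end Adjoin

set_option maxHeartbeats 1600000 in
/-- Let `D` be a finite-dimensional central division `F`-algebra with
`D ≠ F` (degree `> 1`), let `A = Mₘ(D)`, and let `H` be the kernel of a nonzero `F`-linear
functional `τ` on `A` (a hyperplane).  Then every `a ∈ A` is a product of two elements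
of `H`. -/
theorem stmt_2 (F : Type*) [Field F] (D : Type*) [DivisionRing D] [Algebra F D]
    [FiniteDimensional F D]
    (hcenter : Subalgebra.center F D = ⊥)
    (hD : (⊥ : Subalgebra F D) ≠ ⊤)
    (m : ℕ)
    (τ : Matrix (Fin m) (Fin m) D →ₗ[F] F) (hτ : τ ≠ 0)
    (a : Matrix (Fin m) (Fin m) D) :
    ∃ h₁ h₂ : Matrix (Fin m) (Fin m) D,
      h₁ ∈ LinearMap.ker τ ∧ h₂ ∈ LinearMap.ker τ ∧ a = h₁ * h₂ := by
  classical
  -- the case m = 0 is vacuous since then τ = 0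
  rcases Nat.eq_zero_or_pos m with hm | hm
  · exfalso
    apply hτ
    haveI : IsEmpty (Fin m) := by rw [hm]; infer_instance
    haveI : Subsingleton (Matrix (Fin m) (Fin m) D) :=
      ⟨fun x y => by ext i j; exact (IsEmpty.false i).elim⟩
    ext x
    rw [Subsingleton.elim x 0, map_zero]
    rfl
  -- D is noncommutative
  have hnc : ∃ x y : D, x * y ≠ y * x := by
    by_contra h
    push_neg at h
    apply hD
    rw [← hcenter]
    have hct : Subalgebra.center F D = ⊤ := by
      rw [eq_top_iff]
      intro x _
      exact Subalgebra.mem_center_iff.mpr fun g => h g x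
    exact hct
  -- F is infinite (Wedderburn's little theorem)
  haveI : Infinite F := by
    rcases finite_or_infinite F with hfin | hinf
    · exfalso
      haveI : Finite D := by
        have b := Module.finBasis F D
        exact Finite.of_equiv _ b.equivFun.toEquiv.symm
      letI : Field D := littleWedderburn D
      obtain ⟨x, y, hxy⟩ := hnc
      exact hxy (mul_comm x y)
    · exact hinf
  -- pick a noncentral direction
  obtain ⟨q, hq⟩ : ∃ q : D, q ∉ (⊥ : Subalgebra F D) := by
    by_contra h
    push_neg at h
    exact hD (eq_top_iff.mpr fun x _ => h x)
  set K := Algebra.adjoin F {q} with hK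
  haveI : FiniteDimensional F K := FiniteDimensional.of_injective
    (Subalgebra.toSubmodule K).subtype Subtype.val_injective
  have hqK : q ∈ K := Algebra.subset_adjoin rfl
  -- 2 ≤ dim K
  have hr2 : 2 ≤ finrank F K := by
    have hlt : Subalgebra.toSubmodule (⊥ : Subalgebra F D) < Subalgebra.toSubmodule K := by
      rw [SetLike.lt_iff_le_and_exists]
      constructor
      · intro x hx
        rw [Subalgebra.mem_toSubmodule] at hx ⊢
        exact (show (⊥ : Subalgebra F D) ≤ K from bot_le) hx
      · exact ⟨q, (Subalgebra.mem_toSubmodule K).mpr hqK,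
          fun hc => hq ((Subalgebra.mem_toSubmodule ⊥).mp hc)⟩
    have := Submodule.finrank_lt_finrank_of_lt hlt
    have hb : finrank F (Subalgebra.toSubmodule (⊥ : Subalgebra F D)) = 1 := by
      rw [Subalgebra.finrank_toSubmodule, Subalgebra.finrank_bot]
    rw [hb, Subalgebra.finrank_toSubmodule] at this
    omega
  -- dim K < dim D
  have hrK : finrank F K < finrank F D := by
    have hKne : K ≠ ⊤ := by
      intro h
      obtain ⟨x, y, hxy⟩ := hnc
      have hx : x ∈ K := h ▸ trivial
      have hy : y ∈ K := h ▸ trivial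
      exact hxy (adjoin_singleton_comm hx hy)
    have hlt : Subalgebra.toSubmodule K < ⊤ := by
      rcases lt_or_eq_of_le (le_top : Subalgebra.toSubmodule K ≤ ⊤) with h | h
      · exact h
      · exact absurd (Algebra.toSubmodule_eq_top.mp h) hKne
    have := Submodule.finrank_lt hlt.ne
    rwa [Subalgebra.finrank_toSubmodule] at this
  -- the scalar embedding of K into the matrix algebra
  set ι : K →ₗ[F] Matrix (Fin m) (Fin m) D :=
    { toFun := fun k => Matrix.scalar (Fin m) (k : D)
      map_add' := fun k l => by
        push_cast
        rw [map_add]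
      map_smul' := fun c k => by
        ext i j
        simp only [RingHom.id_apply, Matrix.scalar_apply, Matrix.smul_apply]
        rcases eq_or_ne i j with rfl | hij
        · simp only [Matrix.diagonal_apply_eq]
          norm_cast
        · simp [Matrix.diagonal_apply_ne _ hij] } with hι
  have hιapp : ∀ k : K, ι k = Matrix.scalar (Fin m) (k : D) := fun k => rfl
  have hιmul : ∀ k l : K, ι k * ι l = ι (k * l) := by
    intro k l
    rw [hιapp, hιapp, hιapp, ← map_mul]
    norm_cast
  -- the subspace U
  set Θ : Matrix (Fin m) (Fin m) D →ₗ[F] (K →ₗ[F] F) :=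
    { toFun := fun u =>
        { toFun := fun k => τ (a * ι k * u)
          map_add' := fun k l => by
            show τ (a * ι (k + l) * u) = τ (a * ι k * u) + τ (a * ι l * u)
            rw [map_add, mul_add, add_mul, map_add]
          map_smul' := fun c k => by
            show τ (a * ι (c • k) * u) = c • τ (a * ι k * u)
            rw [map_smul, mul_smul_comm, smul_mul_assoc, map_smul] }
      map_add' := fun u v => by
        ext k
        show τ (a * ι k * (u + v)) = τ (a * ι k * u) + τ (a * ι k * v)
        rw [mul_add, map_add]
      map_smul' := fun c u => by
        ext k
        show τ (a * ι k * (c • u)) = c • τ (a * ι k * u)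
        rw [mul_smul_comm, map_smul] } with hΘ
  have hΘapp : ∀ u k, Θ u k = τ (a * ι k * u) := fun u k => rfl
  set U := LinearMap.ker Θ with hU
  -- U contains a unit
  obtain ⟨u, huU, huunit⟩ : ∃ u ∈ U, IsUnit u := by
    by_contra h
    push_neg at h
    have hcod := sing_codim (F := F) U h
    have e1 : finrank F (LinearMap.range Θ) + finrank F U
        = finrank F (Matrix (Fin m) (Fin m) D) := LinearMap.finrank_range_add_finrank_ker Θ
    have e2 : finrank F (LinearMap.range Θ) ≤ finrank F (K →ₗ[F] F) :=
      Submodule.finrank_le _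
    have e3 : finrank F (K →ₗ[F] F) = finrank F K := by
      rw [Module.finrank_linearMap, finrank_self, mul_one]
    omega
  -- pick j in K with τ (u⁻¹ * ι j) = 0
  set w : Matrix (Fin m) (Fin m) D := (huunit.unit⁻¹).val with hw
  have huw : u * w = 1 := by
    have h := huunit.unit.mul_inv
    rw [huunit.unit_spec] at h
    rw [hw]
    exact h
  have hwu : w * u = 1 := by
    have h := huunit.unit.inv_mul
    rw [huunit.unit_spec] at h
    rw [hw]
    exact h
  have hι1 : ι (1 : K) = 1 := by
    rw [hιapp]
    have : ((1 : K) : D) = 1 := rfl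
    rw [this, map_one]
  set g : K →ₗ[F] F :=
    { toFun := fun k => τ (w * ι k)
      map_add' := fun k l => by
        show τ (w * ι (k + l)) = τ (w * ι k) + τ (w * ι l)
        rw [map_add, mul_add, map_add]
      map_smul' := fun c k => by
        show τ (w * ι (c • k)) = c • τ (w * ι k)
        rw [map_smul, mul_smul_comm, map_smul] }
    with hg
  obtain ⟨j, hjker, hjne⟩ : ∃ j : K, j ∈ LinearMap.ker g ∧ j ≠ 0 := by
    have : LinearMap.ker g ≠ ⊥ := by
      intro h
      have hinj : Function.Injective g := LinearMap.ker_eq_bot.mp h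
      have := LinearMap.finrank_le_finrank_of_injective hinj
      rw [finrank_self] at this
      omega
    obtain ⟨j, hj, hjne⟩ := Submodule.exists_mem_ne_zero_of_ne_bot this
    exact ⟨j, hj, hjne⟩
  have hjD : (j : D) ≠ 0 := fun h => hjne (Subtype.ext h)
  -- the inverse of j lies in K
  have hjinv : (j : D)⁻¹ ∈ K := by
    have h1 : (j : D)⁻¹ ∈ Algebra.adjoin F {(j : D)} := inv_mem_adjoin hjD
    have h2 : Algebra.adjoin F {(j : D)} ≤ K := by
      rw [Algebra.adjoin_le_iff]
      intro z hz
      rw [Set.mem_singleton_iff] at hz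
      rw [hz]
      exact j.2
    exact h2 h1
  set k₀ : K := ⟨(j : D)⁻¹, hjinv⟩ with hk₀
  have hk₀j : k₀ * j = 1 := by
    apply Subtype.ext
    show (j : D)⁻¹ * (j : D) = 1
    exact inv_mul_cancel₀ hjD
  have hjk₀ : j * k₀ = 1 := by
    apply Subtype.ext
    show (j : D) * (j : D)⁻¹ = 1
    exact mul_inv_cancel₀ hjD
  -- assemble
  refine ⟨a * (ι k₀ * u), w * ι j, ?_, ?_, ?_⟩
  · rw [LinearMap.mem_ker]
    have h1 : Θ u = 0 := huU
    have h2 : Θ u k₀ = 0 := by rw [h1]; rfl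
    have h3 : τ (a * ι k₀ * u) = 0 := h2
    rw [← mul_assoc]
    exact h3
  · rw [LinearMap.mem_ker]
    exact hjker
  · have h1 : a * (ι k₀ * u) * (w * ι j) = a * (ι k₀ * (u * w) * ι j) := by
      simp only [mul_assoc]
    rw [h1, huw, mul_one, hιmul, hk₀j, hι1, mul_one]
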